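/- arXiv:2102.09929 — 2 statements merged into one kernel-verified Lean document; each statement's English description precedes it below -/
import Mathlib

section
/- For any nonzero rationals a₀, b₀ and any rational a₁, the function h(x) = ((a₁²(a₀⁶ − b₀⁶)/(12a₀b₀⁶))x² + a₁x + a₀)³ + (−(a₁²(a₀⁶ − b₀⁶)/(12a₀²b₀⁵))x² − (a₀²a₁/b₀²)x + b₀)³ is even. -/
theorem stmt7 (a₀ a₁ b₀ : ℚ) (ha₀ : a₀ ≠ 0) (hb₀ : b₀ ≠ 0) (x : ℚ) :
    ((a₁^2*(a₀^6 - b₀^6)/(12*a₀*b₀^6))*x^2 + a₁*x + a₀)^3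
      + (-(a₁^2*(a₀^6 - b₀^6)/(12*a₀^2*b₀^5))*x^2 - (a₀^2*a₁/b₀^2)*x + b₀)^3
    = ((a₁^2*(a₀^6 - b₀^6)/(12*a₀*b₀^6))*(-x)^2 + a₁*(-x) + a₀)^3
      + (-(a₁^2*(a₀^6 - b₀^6)/(12*a₀^2*b₀^5))*(-x)^2 - (a₀^2*a₁/b₀^2)*(-x) + b₀)^3 := by field_simp; ring
end

section
/- For all integers p, q, x, y: (3qy² + 6qp³xy − q(p⁶ − q⁶)x²)³ + (3py² − 6pq³xy + p(p⁶ − q⁶)x²)³ = (3qy² − 6qp³xy − q(p⁶ − q⁶)x²)³ + (3py² + 6pq³xy + p(p⁶ − q⁶)x²)³. -/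
theorem stmt9 (p q x y : ℤ) :
    (3*q*y^2 + 6*q*p^3*x*y - q*(p^6 - q^6)*x^2)^3
      + (3*p*y^2 - 6*p*q^3*x*y + p*(p^6 - q^6)*x^2)^3
    = (3*q*y^2 - 6*q*p^3*x*y - q*(p^6 - q^6)*x^2)^3
      + (3*p*y^2 + 6*p*q^3*x*y + p*(p^6 - q^6)*x^2)^3 := by ring
end
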